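/- arXiv:2105.12709 — 3 statements merged into one kernel-verified Lean document; each statement's English description precedes it below -/
import Mathlib

section
/- There is a universal constant C > 0 (independent of m, n, and p) such that for all positive integers m, n, all p ∈ (0,1), all integers t, and independent random variables X ∼ Bin(n,p) and Y ∼ Bin(m,p), one has |ℙ[X − Y = t + 1] − ℙ[X − Y = t]| ≤ C / ((m + n) p (1 − p)). -/
open MeasureTheory ProbabilityTheory Finset

/-- The Bernoulli(p) measure on `Bool`. -/
noncomputable def bernoulliMeasure (p : ℝ) : Measure Bool :=
  p.toNNReal • Measure.dirac true + (1 - p).toNNReal • Measure.dirac false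

instance (p : ℝ) : IsFiniteMeasure (bernoulliMeasure p) := by
  unfold _root_.bernoulliMeasure; infer_instance

/-- The binomial distribution `Bin(n,p)`: the law of the number of successes in `n`
independent Bernoulli(p) trials. -/
noncomputable def binomMeasure (n : ℕ) (p : ℝ) : Measure ℕ :=
  Measure.map (fun f : Fin n → Bool => (univ.filter fun i => f i = true).card)
    (Measure.pi fun _ : Fin n => bernoulliMeasure p)

instance (n : ℕ) (p : ℝ) : IsFiniteMeasure (binomMeasure n p) :=
  Measure.isFiniteMeasure_map _ _

open Real

/-! ### Auxiliary definitions and lemmas -/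

noncomputable def bpmf (n : ℕ) (p : ℝ) (k : ℕ) : ℝ :=
  (n.choose k : ℝ) * p ^ k * (1 - p) ^ (n - k)

lemma bern_apply (p : ℝ) (b : Bool) :
    bernoulliMeasure p {b} = ENNReal.ofReal (if b then p else 1 - p) := by
  cases b <;>
  · simp [_root_.bernoulliMeasure, Measure.dirac_apply', ENNReal.ofReal, ENNReal.smul_def,
      smul_eq_mul, -Measure.coe_nnreal_smul]

lemma card_count (n k : ℕ) :
    (univ.filter (fun f : Fin n → Bool => (univ.filter fun i => f i = true).card = k)).card
      = n.choose k := by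
  rw [show n.choose k = (Finset.powersetCard k (univ : Finset (Fin n))).card by
    simp [Finset.card_powersetCard]]
  refine Finset.card_bij' (fun f _ => univ.filter fun i => f i = true)
      (fun s _ => fun i => decide (i ∈ s)) ?_ ?_ ?_ ?_
  · intro f hf
    rw [Finset.mem_powersetCard]
    exact ⟨Finset.subset_univ _, (Finset.mem_filter.mp hf).2⟩
  · intro s hs
    rw [Finset.mem_powersetCard] at hs
    simp only [Finset.mem_filter, Finset.mem_univ, true_and]
    rw [← hs.2]
    congr 1
    ext i
    simp
  · intro f hf
    funext i
    by_cases h : f i = true <;> simp [h]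
  · intro s hs
    ext i
    simp

lemma binom_apply (n : ℕ) (p : ℝ) (hp : p ∈ Set.Ioo (0:ℝ) 1) (k : ℕ) :
    binomMeasure n p {k} = ENNReal.ofReal (bpmf n p k) := by
  obtain ⟨hp0, hp1⟩ := hp
  have hq0 : (0:ℝ) ≤ 1 - p := by linarith
  rw [binomMeasure, Measure.map_apply (measurable_of_finite _) (measurableSet_singleton k)]
  have hpre : (fun f : Fin n → Bool => (univ.filter fun i => f i = true).card) ⁻¹' {k}
      = ↑(univ.filter (fun f : Fin n → Bool => (univ.filter fun i => f i = true).card = k)) := by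
    ext f; simp
  rw [hpre]
  have hsum := sum_measure_preimage_singleton
    (μ := Measure.pi fun _ : Fin n => bernoulliMeasure p)
    (univ.filter (fun f : Fin n → Bool => (univ.filter fun i => f i = true).card = k))
    (f := id) (fun y _ => (MeasurableSet.singleton y).preimage measurable_id)
  simp only [Set.preimage_id] at hsum
  rw [← hsum]
  have hsing : ∀ f ∈ univ.filter (fun f : Fin n → Bool => (univ.filter fun i => f i = true).card = k),
      (Measure.pi fun _ : Fin n => bernoulliMeasure p) {f}
        = ENNReal.ofReal p ^ k * ENNReal.ofReal (1 - p) ^ (n - k) := by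
    intro f hf
    have hfk : (univ.filter fun i => f i = true).card = k := (Finset.mem_filter.mp hf).2
    rw [← Set.univ_pi_singleton f, Measure.pi_pi]
    have : ∀ i, bernoulliMeasure p {f i} = ENNReal.ofReal (if f i then p else 1 - p) :=
      fun i => bern_apply p (f i)
    rw [Finset.prod_congr rfl fun i _ => this i,
      ← Finset.prod_filter_mul_prod_filter_not univ (fun i => f i = true)]
    have h1 : ∏ i ∈ univ.filter (fun i => f i = true), ENNReal.ofReal (if f i then p else 1 - p)
        = ENNReal.ofReal p ^ k := by
      rw [Finset.prod_congr rfl (fun i hi => by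
        rw [if_pos]; exact (Finset.mem_filter.mp hi).2), Finset.prod_const, hfk]
    have hc2 : (univ.filter (fun i => ¬ f i = true)).card = n - k := by
      have := Finset.card_filter_add_card_filter_not (s := (univ : Finset (Fin n)))
        (p := fun i => f i = true)
      simp only [Finset.card_univ, Fintype.card_fin] at this
      omega
    have h2 : ∏ i ∈ univ.filter (fun i => ¬ f i = true), ENNReal.ofReal (if f i then p else 1 - p)
        = ENNReal.ofReal (1 - p) ^ (n - k) := by
      rw [Finset.prod_congr rfl (fun i hi => by
        rw [if_neg]; exact (Finset.mem_filter.mp hi).2), Finset.prod_const, hc2]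
    rw [h1, h2]
  rw [Finset.sum_congr rfl hsing, Finset.sum_const, card_count]
  rw [bpmf, ENNReal.ofReal_mul (by positivity), ENNReal.ofReal_mul (by positivity),
    ENNReal.ofReal_pow hp0.le, ENNReal.ofReal_pow hq0, ENNReal.ofReal_natCast,
    nsmul_eq_mul, mul_assoc]

lemma bpmf_nonneg {n : ℕ} {p : ℝ} (hp : p ∈ Set.Ioo (0:ℝ) 1) (k : ℕ) : 0 ≤ bpmf n p k := by
  obtain ⟨h0, h1⟩ := hp
  have : (0:ℝ) ≤ 1 - p := by linarith
  unfold bpmf; positivity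

lemma binom_tail (n : ℕ) (p : ℝ) : binomMeasure n p {k | n < k} = 0 := by
  rw [binomMeasure, Measure.map_apply (measurable_of_finite _)
    ((Set.to_countable _).measurableSet)]
  convert measure_empty (μ := Measure.pi fun _ : Fin n => bernoulliMeasure p)
  ext f
  simp only [Set.mem_preimage, Set.mem_setOf_eq, Set.mem_empty_iff_false, iff_false, not_lt]
  exact le_trans (Finset.card_filter_le _ _) (by simp)

open scoped Classical in
lemma prod_apply_eq_sum (n m : ℕ) (p : ℝ) (hp : p ∈ Set.Ioo (0:ℝ) 1) (S : Set (ℕ × ℕ)) :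
    (((binomMeasure n p).prod (binomMeasure m p)) S).toReal
      = ∑ x ∈ range (n+1) ×ˢ range (m+1),
          if x ∈ S then bpmf n p x.1 * bpmf m p x.2 else 0 := by
  set μ := (binomMeasure n p).prod (binomMeasure m p) with hμ
  set T : Finset (ℕ × ℕ) := range (n+1) ×ˢ range (m+1) with hT
  have hTm : MeasurableSet (↑T : Set (ℕ × ℕ)) := (Set.to_countable _).measurableSet
  have hsplit : μ S = μ (S ∩ ↑T) + μ (S \ ↑T) := (measure_inter_add_diff S hTm).symm
  have htail : μ (S \ ↑T) = 0 := by
    refine le_antisymm ?_ (by simp)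
    have hsub : S \ ↑T ⊆ ({k | n < k} ×ˢ (Set.univ : Set ℕ)) ∪ ((Set.univ : Set ℕ) ×ˢ {l | m < l}) := by
      rintro ⟨k, l⟩ ⟨-, hx⟩
      simp only [hT, Finset.coe_product, Set.mem_prod, Finset.mem_coe, Finset.mem_range] at hx
      simp only [Set.mem_union, Set.mem_prod, Set.mem_setOf_eq, Set.mem_univ, and_true, true_and]
      omega
    calc μ (S \ ↑T) ≤ μ _ := measure_mono hsub
      _ ≤ μ ({k | n < k} ×ˢ (Set.univ : Set ℕ)) + μ ((Set.univ : Set ℕ) ×ˢ {l | m < l}) :=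
        measure_union_le _ _
      _ = 0 := by
        rw [hμ, Measure.prod_prod, Measure.prod_prod, binom_tail, binom_tail]
        simp
  have hST : S ∩ ↑T = ↑(T.filter (· ∈ S)) := by
    ext x; simp [and_comm]
  have hsum := sum_measure_preimage_singleton (μ := μ) (T.filter (· ∈ S))
    (f := id) (fun y _ => (MeasurableSet.singleton y).preimage measurable_id)
  simp only [Set.preimage_id] at hsum
  have hsing : ∀ x ∈ T.filter (· ∈ S),
      μ {x} = ENNReal.ofReal (bpmf n p x.1 * bpmf m p x.2) := by
    rintro ⟨k, l⟩ _
    have : ({(k, l)} : Set (ℕ × ℕ)) = {k} ×ˢ {l} := (Set.singleton_prod_singleton).symm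
    rw [this, hμ, Measure.prod_prod, binom_apply n p hp, binom_apply m p hp,
      ← ENNReal.ofReal_mul (bpmf_nonneg hp k)]
  rw [hsplit, htail, add_zero, hST, ← hsum, Finset.sum_congr rfl hsing,
    ← Finset.sum_filter]
  rw [← ENNReal.ofReal_sum_of_nonneg (fun x _ =>
      mul_nonneg (bpmf_nonneg hp _) (bpmf_nonneg hp _)),
    ENNReal.toReal_ofReal (Finset.sum_nonneg fun x _ =>
      mul_nonneg (bpmf_nonneg hp _) (bpmf_nonneg hp _))]

lemma int_exp (d : ℤ) :
    (∫ θ in (-π)..π, Complex.exp ((d : ℂ) * Complex.I * θ))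
      = if d = 0 then (2 * π : ℂ) else 0 := by
  by_cases hd : d = 0
  · simp [hd, two_mul]
  · rw [if_neg hd]
    have hc : (d : ℂ) * Complex.I ≠ 0 := by
      simp [Complex.I_ne_zero, hd]
    rw [integral_exp_mul_complex hc]
    have h1 : (d : ℂ) * Complex.I * (π : ℂ) = (d : ℤ) * ((π : ℂ) * Complex.I) := by ring
    have h2 : (d : ℂ) * Complex.I * ((-π : ℝ) : ℂ) = (-d : ℤ) * ((π : ℂ) * Complex.I) := by
      push_cast; ring
    rw [h1, h2, Complex.exp_int_mul, Complex.exp_int_mul, Complex.exp_pi_mul_I]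
    have : ((-1 : ℂ) ^ (-d : ℤ)) = (-1 : ℂ) ^ (d : ℤ) := by
      rw [zpow_neg]
      rcases Int.even_or_odd d with he | ho
      · rw [he.neg_one_zpow]; norm_num
      · rw [ho.neg_one_zpow]; norm_num
    rw [this, sub_self, zero_div]

lemma charpoly (n : ℕ) (p : ℝ) (z : ℂ) :
    ((1 - p : ℝ) + (p : ℂ) * z) ^ n = ∑ k ∈ range (n+1), (bpmf n p k : ℂ) * z ^ k := by
  rw [add_comm ((1 - p : ℝ) : ℂ) ((p:ℂ) * z), add_pow]
  refine Finset.sum_congr rfl fun k hk => ?_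
  unfold bpmf
  push_cast
  ring

lemma fourier_rep (n m : ℕ) (p : ℝ) (t : ℤ) :
    (∫ θ in (-π)..π, ((1 - p : ℝ) + (p : ℂ) * Complex.exp (Complex.I * θ)) ^ n *
        ((1 - p : ℝ) + (p : ℂ) * Complex.exp (-(Complex.I * θ))) ^ m *
        Complex.exp (-(t : ℂ) * Complex.I * θ))
      = (2 * π : ℂ) * ∑ x ∈ range (n+1) ×ˢ range (m+1),
          (if (x.1 : ℤ) - (x.2 : ℤ) = t then ((bpmf n p x.1 * bpmf m p x.2 : ℝ) : ℂ) else 0) := by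
  have hrw : ∀ θ : ℝ,
      ((1 - p : ℝ) + (p : ℂ) * Complex.exp (Complex.I * θ)) ^ n *
        ((1 - p : ℝ) + (p : ℂ) * Complex.exp (-(Complex.I * θ))) ^ m *
        Complex.exp (-(t : ℂ) * Complex.I * θ)
      = ∑ x ∈ range (n+1) ×ˢ range (m+1),
          ((bpmf n p x.1 * bpmf m p x.2 : ℝ) : ℂ) *
            Complex.exp ((((x.1 : ℤ) - x.2 - t : ℤ) : ℂ) * Complex.I * θ) := by
    intro θ
    rw [charpoly n p (Complex.exp (Complex.I * θ)), charpoly m p (Complex.exp (-(Complex.I * θ))),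
      Finset.sum_mul_sum, ← Finset.sum_product', Finset.sum_mul]
    refine Finset.sum_congr rfl fun x hx => ?_
    rw [← Complex.exp_nat_mul, ← Complex.exp_nat_mul, mul_mul_mul_comm, ← Complex.exp_add,
      mul_assoc, ← Complex.exp_add]
    push_cast
    ring_nf
  rw [intervalIntegral.integral_congr (fun θ _ => hrw θ)]
  rw [intervalIntegral.integral_finset_sum (fun x hx =>
    (Continuous.intervalIntegrable (by fun_prop) _ _))]
  rw [Finset.mul_sum]
  refine Finset.sum_congr rfl fun x hx => ?_
  rw [intervalIntegral.integral_const_mul, int_exp]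
  by_cases h : (x.1 : ℤ) - x.2 = t
  · rw [if_pos (by omega), if_pos h]; ring
  · rw [if_neg (by omega), if_neg h]; ring

lemma norm_factor (p : ℝ) (hp0 : 0 < p) (hp1 : p < 1) (θ : ℝ) :
    ‖((1 - p : ℝ) : ℂ) + (p : ℂ) * Complex.exp (Complex.I * θ)‖
      ≤ Real.exp (-(p * (1 - p)) * (1 - Real.cos θ)) := by
  have hu0 : 0 ≤ 1 - Real.cos θ := by nlinarith [Real.cos_le_one θ]
  have hz : ((1 - p : ℝ) : ℂ) + (p : ℂ) * Complex.exp (Complex.I * θ)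
      = (((1 - p) + p * Real.cos θ : ℝ) : ℂ) + ((p * Real.sin θ : ℝ) : ℂ) * Complex.I := by
    rw [show Complex.I * (θ : ℂ) = (θ : ℂ) * Complex.I by ring, Complex.exp_mul_I]
    push_cast
    ring
  rw [hz]
  have hsq : ‖(((1 - p) + p * Real.cos θ : ℝ) : ℂ) + ((p * Real.sin θ : ℝ) : ℂ) * Complex.I‖ ^ 2
      = ((1 - p) + p * Real.cos θ)^2 + (p * Real.sin θ)^2 := by
    rw [Complex.sq_norm, Complex.normSq_add_mul_I]
  have hval : ((1 - p) + p * Real.cos θ)^2 + (p * Real.sin θ)^2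
      = 1 - 2 * (p * (1 - p)) * (1 - Real.cos θ) := by
    have hs := Real.sin_sq_add_cos_sq θ
    linear_combination p^2 * hs
  have hle : ‖(((1 - p) + p * Real.cos θ : ℝ) : ℂ) + ((p * Real.sin θ : ℝ) : ℂ) * Complex.I‖ ^ 2
      ≤ (Real.exp (-(p * (1 - p)) * (1 - Real.cos θ)))^2 := by
    rw [hsq, hval, sq, ← Real.exp_add]
    have := Real.add_one_le_exp
      (-(p * (1 - p)) * (1 - Real.cos θ) + -(p * (1 - p)) * (1 - Real.cos θ))
    linarith
  exact (pow_le_pow_iff_left₀ (norm_nonneg _) (Real.exp_pos _).le (two_ne_zero)).mp hle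

lemma jordan (θ : ℝ) (h : |θ| ≤ π) : 2 * (θ^2 / π^2) ≤ 1 - Real.cos θ := by
  have hπ : (0:ℝ) < π := Real.pi_pos
  wlog hθ : 0 ≤ θ generalizing θ
  · have h' := this (-θ) (by rwa [abs_neg]) (by linarith [lt_of_not_ge hθ])
    rw [Real.cos_neg] at h'
    rw [show (-θ)^2 = θ^2 by ring] at h'
    exact h'
  · have hθπ : θ ≤ π := le_trans (le_abs_self θ) h
    have hhalf : θ / 2 ≤ π / 2 := by linarith
    have hsin := Real.mul_le_sin (x := θ/2) (by linarith) hhalf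
    have hc : Real.cos θ = 2 * Real.cos (θ/2)^2 - 1 := by
      have := Real.cos_two_mul (θ/2)
      rwa [show 2*(θ/2) = θ by ring] at this
    have hs' := Real.sin_sq_add_cos_sq (θ/2)
    have h2 : Real.sin (θ/2)^2 = (1 - Real.cos θ)/2 := by linarith
    have h3 : (2/π * (θ/2))^2 ≤ Real.sin (θ/2)^2 :=
      pow_le_pow_left₀ (by positivity) hsin 2
    rw [h2] at h3
    have h4 : (2/π * (θ/2))^2 = θ^2/π^2 := by field_simp
    rw [h4] at h3
    linarith

lemma gauss_bound (a : ℝ) (ha : 0 < a) :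
    (∫ θ in (-π)..π, |θ| * Real.exp (-(a*θ^2))) ≤ 1/a := by
  have hπ : (0:ℝ) < π := Real.pi_pos
  have hderiv : ∀ θ : ℝ, HasDerivAt (fun θ => -Real.exp (-(a*θ^2)) / (2*a))
      (θ * Real.exp (-(a*θ^2))) θ := by
    intro θ
    have h1 : HasDerivAt (fun θ : ℝ => -(a*θ^2)) (-(a*(2*θ))) θ := by
      exact (((hasDerivAt_pow 2 θ).const_mul a).neg).congr_deriv (by norm_num)
    have h2 := (h1.exp.neg).div_const (2*a)
    refine h2.congr_deriv ?_
    rw [div_eq_iff (by positivity)]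
    ring
  have hderiv2 : ∀ θ : ℝ, HasDerivAt (fun θ => Real.exp (-(a*θ^2)) / (2*a))
      (-θ * Real.exp (-(a*θ^2))) θ := by
    intro θ
    have hf : (fun θ => Real.exp (-(a*θ^2)) / (2*a)) = -(fun θ => -Real.exp (-(a*θ^2)) / (2*a)) := by
      funext x; simp [neg_div]
    rw [hf]; exact (hderiv θ).neg.congr_deriv (by ring)
  have hcont : Continuous fun θ : ℝ => |θ| * Real.exp (-(a*θ^2)) := by fun_prop
  have hint : ∀ b c : ℝ, IntervalIntegrable (fun θ : ℝ => |θ| * Real.exp (-(a*θ^2))) volume b c :=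
    fun b c => hcont.intervalIntegrable b c
  have hsplit : (∫ θ in (-π)..π, |θ| * Real.exp (-(a*θ^2)))
      = (∫ θ in (-π)..(0:ℝ), |θ| * Real.exp (-(a*θ^2)))
        + ∫ θ in (0:ℝ)..π, |θ| * Real.exp (-(a*θ^2)) :=
    (intervalIntegral.integral_add_adjacent_intervals (hint _ _) (hint _ _)).symm
  have hexp1 : Real.exp (-(a*π^2)) ≤ 1 := Real.exp_le_one_iff.mpr (by nlinarith)
  have hexp2 : 0 < Real.exp (-(a*π^2)) := Real.exp_pos _
  have hpos : (∫ θ in (0:ℝ)..π, |θ| * Real.exp (-(a*θ^2))) ≤ 1/(2*a) := by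
    have hcongr : (∫ θ in (0:ℝ)..π, |θ| * Real.exp (-(a*θ^2)))
        = ∫ θ in (0:ℝ)..π, θ * Real.exp (-(a*θ^2)) := by
      refine intervalIntegral.integral_congr fun θ hθ => ?_
      rw [Set.uIcc_of_le (by linarith)] at hθ
      rw [_root_.abs_of_nonneg hθ.1]
    rw [hcongr, intervalIntegral.integral_eq_sub_of_hasDerivAt (fun θ _ => hderiv θ)
      (((by fun_prop : Continuous fun θ : ℝ => θ * Real.exp (-(a*θ^2))).intervalIntegrable) _ _)]
    rw [show (-(a*(0:ℝ)^2)) = 0 by ring, Real.exp_zero,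
      show -Real.exp (-(a*π^2)) / (2*a) - -(1:ℝ) / (2*a)
        = (1 - Real.exp (-(a*π^2)))/(2*a) by ring]
    gcongr
    linarith
  have hneg : (∫ θ in (-π)..(0:ℝ), |θ| * Real.exp (-(a*θ^2))) ≤ 1/(2*a) := by
    have hcongr : (∫ θ in (-π)..(0:ℝ), |θ| * Real.exp (-(a*θ^2)))
        = ∫ θ in (-π)..(0:ℝ), -θ * Real.exp (-(a*θ^2)) := by
      refine intervalIntegral.integral_congr fun θ hθ => ?_
      rw [Set.uIcc_of_le (by linarith)] at hθ
      rw [_root_.abs_of_nonpos hθ.2]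
    rw [hcongr, intervalIntegral.integral_eq_sub_of_hasDerivAt (fun θ _ => hderiv2 θ)
      (((by fun_prop : Continuous fun θ : ℝ => -θ * Real.exp (-(a*θ^2))).intervalIntegrable) _ _)]
    rw [show (-(a*(0:ℝ)^2)) = 0 by ring, Real.exp_zero, show (-(a*(-π)^2)) = -(a*π^2) by ring,
      show (1:ℝ) / (2*a) - Real.exp (-(a*π^2)) / (2*a)
        = (1 - Real.exp (-(a*π^2)))/(2*a) by ring]
    gcongr
    linarith
  have hfin : 1/(2*a) + 1/(2*a) = 1/a := by
    rw [← add_div, show (1:ℝ)+1 = 2*1 by norm_num, mul_div_mul_left 1 a two_ne_zero]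
  linarith [hsplit]

lemma norm_exp_I_sub_one (x : ℝ) : ‖Complex.exp (-(Complex.I * x)) - 1‖ ≤ |x| := by
  have h : Complex.exp (-(Complex.I * x)) - 1
      = ((Real.cos x - 1 : ℝ) : ℂ) + ((-Real.sin x : ℝ) : ℂ) * Complex.I := by
    rw [show -(Complex.I * (x:ℂ)) = ((-x : ℝ) : ℂ) * Complex.I by push_cast; ring,
      Complex.exp_mul_I, ← Complex.ofReal_cos, ← Complex.ofReal_sin,
      Real.cos_neg, Real.sin_neg]
    push_cast
    ring
  rw [h]
  have hsq : ‖((Real.cos x - 1 : ℝ) : ℂ) + ((-Real.sin x : ℝ) : ℂ) * Complex.I‖ ^ 2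
      = (Real.cos x - 1)^2 + (-Real.sin x)^2 := by
    rw [Complex.sq_norm, Complex.normSq_add_mul_I]
  have hcos := Real.one_sub_sq_div_two_le_cos (x := x)
  have hs := Real.sin_sq_add_cos_sq x
  have hle : ‖((Real.cos x - 1 : ℝ) : ℂ) + ((-Real.sin x : ℝ) : ℂ) * Complex.I‖ ^ 2 ≤ |x| ^ 2 := by
    rw [hsq, sq_abs]
    nlinarith [Real.cos_le_one x]
  exact (pow_le_pow_iff_left₀ (norm_nonneg _) (abs_nonneg _) (two_ne_zero)).mp hle
/-- **Lemma (binomial shift).** There is a universal constant `C > 0` such that for all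
positive integers `m, n`, all `p ∈ (0,1)`, independent `X ∼ Bin(n,p)`, `Y ∼ Bin(m,p)`
and every integer `t`, `|ℙ[X - Y = t + 1] - ℙ[X - Y = t]| ≤ C / ((m+n) p (1-p))`. -/
theorem binomial_difference_shift :
    ∃ C : ℝ, 0 < C ∧ ∀ m n : ℕ, 0 < m → 0 < n → ∀ p : ℝ, p ∈ Set.Ioo (0 : ℝ) 1 →
      ∀ t : ℤ,
        |(((binomMeasure n p).prod (binomMeasure m p))
            {q : ℕ × ℕ | (q.1 : ℤ) - (q.2 : ℤ) = t + 1}).toReal -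
         (((binomMeasure n p).prod (binomMeasure m p))
            {q : ℕ × ℕ | (q.1 : ℤ) - (q.2 : ℤ) = t}).toReal| ≤
          C / ((m + n : ℝ) * p * (1 - p)) := by
  classical
  refine ⟨1, one_pos, ?_⟩
  intro m n hm hn p hp t
  obtain ⟨hp0, hp1⟩ := hp
  have hπ : (0:ℝ) < π := Real.pi_pos
  have hpq0 : (0:ℝ) < p * (1 - p) := by nlinarith
  have hN : (0:ℝ) < (n:ℝ) + m := by
    have : (0:ℝ) < (n:ℝ) := by exact_mod_cast hn
    have : (0:ℝ) ≤ (m:ℝ) := by positivity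
    linarith
  set a : ℝ := 2 * ((n:ℝ) + m) * (p * (1 - p)) / π^2 with ha
  have ha0 : 0 < a := by positivity
  -- probabilities as finite sums
  have hPs : ∀ s : ℤ,
      (((binomMeasure n p).prod (binomMeasure m p)) {q : ℕ × ℕ | (q.1 : ℤ) - (q.2 : ℤ) = s}).toReal
        = ∑ x ∈ range (n+1) ×ˢ range (m+1),
            if (x.1 : ℤ) - (x.2 : ℤ) = s then bpmf n p x.1 * bpmf m p x.2 else 0 := by
    intro s
    rw [prod_apply_eq_sum n m p ⟨hp0, hp1⟩]
    refine Finset.sum_congr rfl fun x _ => ?_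
    by_cases h : (x.1 : ℤ) - (x.2 : ℤ) = s
    · rw [if_pos h, if_pos (by exact h : x ∈ {q : ℕ × ℕ | (q.1 : ℤ) - (q.2 : ℤ) = s})]
    · rw [if_neg h, if_neg (by exact h : ¬ x ∈ {q : ℕ × ℕ | (q.1 : ℤ) - (q.2 : ℤ) = s})]
  rw [hPs (t+1), hPs t]
  set P : ℤ → ℝ := fun s => ∑ x ∈ range (n+1) ×ˢ range (m+1),
      if (x.1 : ℤ) - (x.2 : ℤ) = s then bpmf n p x.1 * bpmf m p x.2 else 0 with hPdef
  have hrwP : ∀ s : ℤ, (∑ x ∈ range (n+1) ×ˢ range (m+1),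
      if (x.1 : ℤ) - (x.2 : ℤ) = s then bpmf n p x.1 * bpmf m p x.2 else 0) = P s := fun s => rfl
  rw [hrwP (t+1), hrwP t]
  -- Fourier representation
  have hF : ∀ s : ℤ,
      (∫ θ in (-π)..π, ((1 - p : ℝ) + (p : ℂ) * Complex.exp (Complex.I * θ)) ^ n *
          ((1 - p : ℝ) + (p : ℂ) * Complex.exp (-(Complex.I * θ))) ^ m *
          Complex.exp (-(s : ℂ) * Complex.I * θ))
        = (2 * π : ℂ) * ((P s : ℝ) : ℂ) := by
    intro s
    rw [fourier_rep n m p s]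
    congr 1
    rw [hPdef, Complex.ofReal_sum]
    refine Finset.sum_congr rfl fun x _ => ?_
    split_ifs <;> simp
  have hIntF : ∀ s : ℤ, IntervalIntegrable
      (fun θ : ℝ => ((1 - p : ℝ) + (p : ℂ) * Complex.exp (Complex.I * θ)) ^ n *
        ((1 - p : ℝ) + (p : ℂ) * Complex.exp (-(Complex.I * θ))) ^ m *
        Complex.exp (-(s : ℂ) * Complex.I * θ)) volume (-π) π :=
    fun s => (Continuous.intervalIntegrable (by fun_prop) _ _)
  have hdiff : (∫ θ in (-π)..π,
        (((1 - p : ℝ) + (p : ℂ) * Complex.exp (Complex.I * θ)) ^ n *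
          ((1 - p : ℝ) + (p : ℂ) * Complex.exp (-(Complex.I * θ))) ^ m *
          Complex.exp (-((t+1 : ℤ) : ℂ) * Complex.I * θ) -
        ((1 - p : ℝ) + (p : ℂ) * Complex.exp (Complex.I * θ)) ^ n *
          ((1 - p : ℝ) + (p : ℂ) * Complex.exp (-(Complex.I * θ))) ^ m *
          Complex.exp (-(t : ℂ) * Complex.I * θ)))
      = (2 * π : ℂ) * (((P (t+1) - P t : ℝ)) : ℂ) := by
    rw [intervalIntegral.integral_sub (hIntF (t+1)) (hIntF t), hF (t+1), hF t]
    push_cast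
    ring
  -- pointwise bound
  have hpt : ∀ θ ∈ Set.Icc (-π) π,
      ‖((1 - p : ℝ) + (p : ℂ) * Complex.exp (Complex.I * θ)) ^ n *
          ((1 - p : ℝ) + (p : ℂ) * Complex.exp (-(Complex.I * θ))) ^ m *
          Complex.exp (-((t+1 : ℤ) : ℂ) * Complex.I * θ) -
        ((1 - p : ℝ) + (p : ℂ) * Complex.exp (Complex.I * θ)) ^ n *
          ((1 - p : ℝ) + (p : ℂ) * Complex.exp (-(Complex.I * θ))) ^ m *
          Complex.exp (-(t : ℂ) * Complex.I * θ)‖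
        ≤ |θ| * Real.exp (-(a * θ^2)) := by
    intro θ hθ
    have hθabs : |θ| ≤ π := abs_le.mpr ⟨hθ.1, hθ.2⟩
    have hu0 : 0 ≤ 1 - Real.cos θ := by nlinarith [Real.cos_le_one θ]
    have hA := norm_factor p hp0 hp1 θ
    have hB : ‖((1 - p : ℝ) : ℂ) + (p : ℂ) * Complex.exp (-(Complex.I * θ))‖
        ≤ Real.exp (-(p * (1 - p)) * (1 - Real.cos θ)) := by
      have h' := norm_factor p hp0 hp1 (-θ)
      rw [Real.cos_neg] at h'
      rw [show ((-θ : ℝ) : ℂ) = -(θ : ℂ) by push_cast; ring, mul_neg] at h'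
      exact h'
    have hfac : Complex.exp (-((t+1 : ℤ) : ℂ) * Complex.I * θ) -
          Complex.exp (-(t : ℂ) * Complex.I * θ)
        = Complex.exp (-(t : ℂ) * Complex.I * θ) * (Complex.exp (-(Complex.I * θ)) - 1) := by
      rw [mul_sub, mul_one, ← Complex.exp_add]
      congr 1
      push_cast
      ring
    have h0 : ‖Complex.exp (-(t : ℂ) * Complex.I * θ)‖ = 1 := by
      rw [show (-(t : ℂ)) * Complex.I * (θ : ℂ) = ((-(t : ℝ) * θ : ℝ) : ℂ) * Complex.I by
        push_cast; ring, Complex.norm_exp_ofReal_mul_I]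
    have hE : ‖Complex.exp (-((t+1 : ℤ) : ℂ) * Complex.I * θ) -
          Complex.exp (-(t : ℂ) * Complex.I * θ)‖ ≤ |θ| := by
      rw [hfac, norm_mul, h0, one_mul]
      exact norm_exp_I_sub_one θ
    calc ‖((1 - p : ℝ) + (p : ℂ) * Complex.exp (Complex.I * θ)) ^ n *
          ((1 - p : ℝ) + (p : ℂ) * Complex.exp (-(Complex.I * θ))) ^ m *
          Complex.exp (-((t+1 : ℤ) : ℂ) * Complex.I * θ) -
        ((1 - p : ℝ) + (p : ℂ) * Complex.exp (Complex.I * θ)) ^ n *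
          ((1 - p : ℝ) + (p : ℂ) * Complex.exp (-(Complex.I * θ))) ^ m *
          Complex.exp (-(t : ℂ) * Complex.I * θ)‖
        = ‖((1 - p : ℝ) + (p : ℂ) * Complex.exp (Complex.I * θ))‖ ^ n *
          ‖((1 - p : ℝ) + (p : ℂ) * Complex.exp (-(Complex.I * θ)))‖ ^ m *
          ‖Complex.exp (-((t+1 : ℤ) : ℂ) * Complex.I * θ) -
            Complex.exp (-(t : ℂ) * Complex.I * θ)‖ := by
          rw [← mul_sub, norm_mul, norm_mul, norm_pow, norm_pow]
      _ ≤ Real.exp (-(p * (1 - p)) * (1 - Real.cos θ)) ^ n *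
          Real.exp (-(p * (1 - p)) * (1 - Real.cos θ)) ^ m * |θ| := by
          gcongr <;> first | exact norm_nonneg _ | exact hA | exact hB | exact hE
      _ = Real.exp (-(((n:ℝ) + m) * (p * (1 - p)) * (1 - Real.cos θ))) * |θ| := by
          rw [← pow_add, ← Real.exp_nat_mul]
          congr 2
          push_cast
          ring
      _ ≤ Real.exp (-(a * θ^2)) * |θ| := by
          have hj := jordan θ hθabs
          have key : a * θ^2 ≤ ((n:ℝ) + m) * (p * (1 - p)) * (1 - Real.cos θ) := by
            have h1 : a * θ^2 = ((n:ℝ) + m) * (p * (1 - p)) * (2 * (θ^2 / π^2)) := by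
              rw [ha]; field_simp
            rw [h1]
            have := mul_le_mul_of_nonneg_left hj (le_of_lt (by positivity :
              (0:ℝ) < ((n:ℝ) + m) * (p * (1 - p))))
            linarith
          have := Real.exp_le_exp.mpr (neg_le_neg key)
          exact mul_le_mul_of_nonneg_right this (abs_nonneg θ)
      _ = |θ| * Real.exp (-(a * θ^2)) := mul_comm _ _
  -- put everything together
  have habs : |P (t+1) - P t|
      = (2*π)⁻¹ * ‖(2 * π : ℂ) * (((P (t+1) - P t : ℝ)) : ℂ)‖ := by
    rw [norm_mul, Complex.norm_real]
    rw [show ‖(2 * (π:ℝ) : ℂ)‖ = 2*π by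
      rw [show ((2:ℂ) * (π:ℝ)) = (((2*π : ℝ)) : ℂ) by push_cast; ring, Complex.norm_real,
        Real.norm_eq_abs, abs_of_pos (by linarith)]]
    rw [Real.norm_eq_abs]
    field_simp
  have hineq : ‖(2 * π : ℂ) * (((P (t+1) - P t : ℝ)) : ℂ)‖ ≤ 1/a := by
    rw [← hdiff]
    have hcont1 : Continuous fun θ : ℝ =>
        ‖((1 - p : ℝ) + (p : ℂ) * Complex.exp (Complex.I * θ)) ^ n *
          ((1 - p : ℝ) + (p : ℂ) * Complex.exp (-(Complex.I * θ))) ^ m *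
          Complex.exp (-((t+1 : ℤ) : ℂ) * Complex.I * θ) -
        ((1 - p : ℝ) + (p : ℂ) * Complex.exp (Complex.I * θ)) ^ n *
          ((1 - p : ℝ) + (p : ℂ) * Complex.exp (-(Complex.I * θ))) ^ m *
          Complex.exp (-(t : ℂ) * Complex.I * θ)‖ := by fun_prop
    calc ‖∫ θ in (-π)..π, _‖ ≤ ∫ θ in (-π)..π,
          ‖((1 - p : ℝ) + (p : ℂ) * Complex.exp (Complex.I * θ)) ^ n *
            ((1 - p : ℝ) + (p : ℂ) * Complex.exp (-(Complex.I * θ))) ^ m *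
            Complex.exp (-((t+1 : ℤ) : ℂ) * Complex.I * θ) -
          ((1 - p : ℝ) + (p : ℂ) * Complex.exp (Complex.I * θ)) ^ n *
            ((1 - p : ℝ) + (p : ℂ) * Complex.exp (-(Complex.I * θ))) ^ m *
            Complex.exp (-(t : ℂ) * Complex.I * θ)‖ :=
        intervalIntegral.norm_integral_le_integral_norm (by linarith)
      _ ≤ ∫ θ in (-π)..π, |θ| * Real.exp (-(a * θ^2)) := by
        refine intervalIntegral.integral_mono_on (by linarith)
          (hcont1.intervalIntegrable _ _)
          ((by fun_prop : Continuous fun θ : ℝ => |θ| * Real.exp (-(a * θ^2))).intervalIntegrable _ _)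
          hpt
      _ ≤ 1/a := gauss_bound a ha0
  have hfinal : (2*π)⁻¹ * (1/a) ≤ 1 / (((m:ℝ) + n) * p * (1 - p)) := by
    have hX : (0:ℝ) < ((m:ℝ) + n) * p * (1 - p) := by
      have hm' : (0:ℝ) ≤ (m:ℝ) := by positivity
      have hn' : (0:ℝ) < (n:ℝ) := by exact_mod_cast hn
      exact mul_pos (mul_pos (by linarith) hp0) (by linarith)
    have heq : (2*π)⁻¹ * (1/a) = π / (4 * (((m:ℝ) + n) * p * (1 - p))) := by
      rw [ha]; field_simp; ring
    rw [heq, show (1:ℝ) / (((m:ℝ) + n) * p * (1 - p))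
        = 4 / (4 * (((m:ℝ) + n) * p * (1 - p))) by field_simp]
    gcongr
    exact Real.pi_le_four
  calc |P (t+1) - P t| = (2*π)⁻¹ * ‖(2 * π : ℂ) * (((P (t+1) - P t : ℝ)) : ℂ)‖ := habs
    _ ≤ (2*π)⁻¹ * (1/a) := by
        refine mul_le_mul_of_nonneg_left hineq (by positivity)
    _ ≤ 1 / (((m:ℝ) + n) * p * (1 - p)) := hfinal
end

section
/- Let δ ∈ (0,1), let p ∈ (0,1) and β > 0, and let G be a (p,β)-jumbled graph on n vertices with minimum degree at least δnp. Let s : V(G) → {−1,+1} be any opinion assignment and let s' be the opinion obtained from s by one step of majority dynamics. If ∑_{v∈V(G)} s(v) ≥ 8β/(p√δ), then ∑_{v∈V(G)} s'(v) ≥ (1 − δ/2)·n. -/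
open Finset

/-- The number of edges between `U` and `W`, counted as ordered pairs
`(u,w) ∈ U × W` with `uw` an edge. -/
def edgeCount {V : Type*} [Fintype V] (G : SimpleGraph V) [DecidableRel G.Adj]
    (U W : Finset V) : ℕ :=
  ∑ u ∈ U, ∑ w ∈ W, if G.Adj u w then 1 else 0

/-- A graph `G` is `(p,β)`-jumbled if `|e(U,W) - p|U||W|| ≤ β√(|U||W|)` for all
vertex subsets `U, W`. -/
def IsJumbled {V : Type*} [Fintype V] (G : SimpleGraph V) [DecidableRel G.Adj]
    (p β : ℝ) : Prop :=
  ∀ U W : Finset V,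
    |(edgeCount G U W : ℝ) - p * U.card * W.card| ≤
      β * Real.sqrt ((U.card : ℝ) * W.card)

/-- One step of majority dynamics on the graph `G`: each vertex simultaneously adopts
the sign of the sum of its neighbours' opinions, keeping its opinion on a tie. -/
def graphMajStep {V : Type*} [Fintype V] (G : SimpleGraph V) [DecidableRel G.Adj]
    (s : V → ℤ) : V → ℤ :=
  fun v =>
    let t : ℤ := ∑ u ∈ G.neighborFinset v, s u
    if 0 < t then 1 else if t < 0 then -1 else s v

lemma pm_facts {V : Type*} [Fintype V] (f : V → ℤ)
    (hf : ∀ v, f v = 1 ∨ f v = -1) :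
    (∑ v, f v) = ((univ.filter (fun v => f v = 1)).card : ℤ)
      - ((univ.filter (fun v => f v = -1)).card) ∧
    (univ.filter (fun v => f v = 1)).card
      + (univ.filter (fun v => f v = -1)).card = Fintype.card V := by
  classical
  have e2 : univ.filter (fun v => ¬ f v = 1) = univ.filter (fun v => f v = -1) := by
    apply Finset.filter_congr; intro v _; rcases hf v with h | h <;> simp [h]
  constructor
  · rw [← Finset.sum_filter_add_sum_filter_not univ (fun v => f v = 1), e2]
    have h1 : ∑ v ∈ univ.filter (fun v => f v = 1), f v
        = ((univ.filter (fun v => f v = 1)).card : ℤ) := by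
      rw [Finset.sum_congr rfl (fun v hv => (Finset.mem_filter.mp hv).2)]
      simp
    have h2 : ∑ v ∈ univ.filter (fun v => f v = -1), f v
        = -((univ.filter (fun v => f v = -1)).card : ℤ) := by
      rw [Finset.sum_congr rfl (fun v hv => (Finset.mem_filter.mp hv).2)]
      simp
    rw [h1, h2]; ring
  · have h := Finset.card_filter_add_card_filter_not (s := (univ : Finset V))
      (p := fun v => f v = 1)
    rw [e2, Finset.card_univ] at h
    exact h

/-- **One majority step from a `Θ(β/p)` bias to 99% agreement on jumbled graphs.**
If `G` is a `(p,β)`-jumbled graph on `n` vertices with minimum degree at least `δnp`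
and the ±1 opinion `s` satisfies `∑ᵥ s(v) ≥ 8β/(p√δ)`, then after one step of majority
dynamics `∑ᵥ s'(v) ≥ (1 - δ/2) n`. -/
theorem jumbled_majority_step_expand {V : Type*} [Fintype V]
    (G : SimpleGraph V) [DecidableRel G.Adj] (δ p β : ℝ)
    (hδ : δ ∈ Set.Ioo (0 : ℝ) 1) (hp : p ∈ Set.Ioo (0 : ℝ) 1) (hβ : 0 < β)
    (hjumbled : IsJumbled G p β)
    (hdeg : ∀ v : V, δ * (Fintype.card V) * p ≤ (G.degree v : ℝ))
    (s : V → ℤ) (hs : ∀ v, s v = 1 ∨ s v = -1)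
    (hsum : 8 * β / (p * Real.sqrt δ) ≤ ((∑ v, s v : ℤ) : ℝ)) :
    (1 - δ/2) * (Fintype.card V) ≤ ((∑ v, graphMajStep G s v : ℤ) : ℝ) := by
  classical
  obtain ⟨hδ0, hδ1⟩ := hδ
  obtain ⟨hp0, hp1⟩ := hp
  set s' := graphMajStep G s with hs'def
  have hs' : ∀ v, s' v = 1 ∨ s' v = -1 := by
    intro v
    have : s' v = (if 0 < (∑ u ∈ G.neighborFinset v, s u) then (1:ℤ)
        else if (∑ u ∈ G.neighborFinset v, s u) < 0 then -1 else s v) := rfl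
    rw [this]
    split_ifs with h1 h2
    · exact Or.inl rfl
    · exact Or.inr rfl
    · exact hs v
  set P := univ.filter (fun v => s v = 1) with hP
  set M := univ.filter (fun v => s v = -1) with hM
  set B := univ.filter (fun v => s' v = -1) with hB
  obtain ⟨hsumPM, hPM⟩ := pm_facts s hs
  obtain ⟨hsum', hAB⟩ := pm_facts s' hs'
  -- for v ∈ B the neighbour sum is nonpositive
  have hBneg : ∀ v ∈ B, (∑ u ∈ G.neighborFinset v, s u) ≤ 0 := by
    intro v hv
    have hv' := (Finset.mem_filter.mp hv).2
    by_contra h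
    push_neg at h
    have hv2 : (if 0 < (∑ u ∈ G.neighborFinset v, s u) then (1:ℤ)
        else if (∑ u ∈ G.neighborFinset v, s u) < 0 then -1 else s v) = -1 := hv'
    rw [if_pos h] at hv2
    norm_num at hv2
  -- edge count identity
  have hedge : (edgeCount G B P : ℤ) - (edgeCount G B M : ℤ)
      = ∑ v ∈ B, ∑ u ∈ G.neighborFinset v, s u := by
    rw [edgeCount, edgeCount]
    push_cast
    rw [← Finset.sum_sub_distrib]
    apply Finset.sum_congr rfl
    intro v _
    have hnb : ∑ u ∈ G.neighborFinset v, s u = ∑ u, if G.Adj v u then s u else 0 := by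
      rw [SimpleGraph.neighborFinset_eq_filter, Finset.sum_filter]
    rw [hnb, ← Finset.sum_filter_add_sum_filter_not univ (fun u => s u = 1)]
    have e2 : univ.filter (fun u => ¬ s u = 1) = M := by
      apply Finset.filter_congr; intro u _; rcases hs u with h | h <;> simp [h, hM]
    rw [e2]
    have h1 : ∑ u ∈ P, (if G.Adj v u then s u else 0)
        = ∑ u ∈ P, (if G.Adj v u then (1:ℤ) else 0) := by
      apply Finset.sum_congr rfl
      intro u hu
      rw [(Finset.mem_filter.mp hu).2]
    have h2 : ∑ u ∈ M, (if G.Adj v u then s u else 0)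
        = -∑ u ∈ M, (if G.Adj v u then (1:ℤ) else 0) := by
      rw [← Finset.sum_neg_distrib]
      apply Finset.sum_congr rfl
      intro u hu
      rw [(Finset.mem_filter.mp hu).2]
      split_ifs <;> ring
    rw [h1, h2]
    have hcomm : ∀ (W : Finset V), ∑ u ∈ W, (if G.Adj v u then (1:ℤ) else 0)
        = ∑ u ∈ W, (if G.Adj u v then (1:ℤ) else 0) := by
      intro W; apply Finset.sum_congr rfl; intro u _; simp_rw [G.adj_comm]
    rw [hcomm P, hcomm M]
    ring
  have hEC : (edgeCount G B P : ℝ) ≤ (edgeCount G B M : ℝ) := by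
    have h1 : (edgeCount G B P : ℤ) ≤ (edgeCount G B M : ℤ) := by
      have h2 : (∑ v ∈ B, ∑ u ∈ G.neighborFinset v, s u) ≤ 0 :=
        Finset.sum_nonpos hBneg
      linarith [hedge]
    exact_mod_cast h1
  -- real-number setup
  set A := univ.filter (fun v => s' v = 1) with hA
  rw [← hP, ← hM] at hsumPM hPM
  rw [← hB] at hsum' hAB
  have hnr0 : (0:ℝ) ≤ (Fintype.card V : ℝ) := Nat.cast_nonneg _
  have hb0 : (0:ℝ) ≤ (B.card : ℝ) := Nat.cast_nonneg _
  have hPn : ((P.card : ℝ)) ≤ (Fintype.card V : ℝ) := by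
    exact_mod_cast (Finset.card_le_univ P).trans_eq (Finset.card_univ)
  have hMn : ((M.card : ℝ)) ≤ (Fintype.card V : ℝ) := by
    exact_mod_cast (Finset.card_le_univ M).trans_eq (Finset.card_univ)
  have hj1 := (abs_le.mp (hjumbled B P))
  have hj2 := (abs_le.mp (hjumbled B M))
  have sP : Real.sqrt ((B.card:ℝ) * (P.card:ℝ))
      ≤ Real.sqrt (B.card:ℝ) * Real.sqrt (Fintype.card V : ℝ) := by
    rw [Real.sqrt_mul hb0]
    gcongr
  have sM : Real.sqrt ((B.card:ℝ) * (M.card:ℝ))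
      ≤ Real.sqrt (B.card:ℝ) * Real.sqrt (Fintype.card V : ℝ) := by
    rw [Real.sqrt_mul hb0]
    gcongr
  have key : p * (B.card:ℝ) * ((P.card:ℝ) - (M.card:ℝ))
      ≤ 2 * β * (Real.sqrt (B.card:ℝ) * Real.sqrt (Fintype.card V : ℝ)) := by
    have m1 := mul_le_mul_of_nonneg_left sP hβ.le
    have m2 := mul_le_mul_of_nonneg_left sM hβ.le
    nlinarith [hj1.1, hj2.2, hEC]
  -- the bias hypothesis
  have hS : 8 * β / (p * Real.sqrt δ) ≤ (P.card:ℝ) - (M.card:ℝ) := by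
    rw [hsumPM] at hsum
    push_cast at hsum
    exact hsum
  have hpd : (0:ℝ) < p * Real.sqrt δ := mul_pos hp0 (Real.sqrt_pos.mpr hδ0)
  have h8 : 8 * β ≤ ((P.card:ℝ) - (M.card:ℝ)) * (p * Real.sqrt δ) :=
    (div_le_iff₀ hpd).mp hS
  -- bound |B|
  have hBbound : (B.card:ℝ) ≤ δ * (Fintype.card V : ℝ) / 16 := by
    rcases Nat.eq_zero_or_pos B.card with h0 | hpos
    · rw [h0]
      push_cast
      positivity
    · have hb1 : (1:ℝ) ≤ (B.card : ℝ) := by exact_mod_cast hpos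
      have hsbpos : 0 < Real.sqrt (B.card:ℝ) := Real.sqrt_pos.mpr (by linarith)
      have hsb : Real.sqrt (B.card:ℝ) * Real.sqrt (B.card:ℝ) = (B.card:ℝ) :=
        Real.mul_self_sqrt hb0
      have hsn : Real.sqrt (Fintype.card V : ℝ) * Real.sqrt (Fintype.card V : ℝ)
          = (Fintype.card V : ℝ) := Real.mul_self_sqrt hnr0
      have hsd : Real.sqrt δ * Real.sqrt δ = δ := Real.mul_self_sqrt hδ0.le
      have step1 : p * Real.sqrt (B.card:ℝ) * ((P.card:ℝ) - (M.card:ℝ))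
          ≤ 2 * β * Real.sqrt (Fintype.card V : ℝ) := by
        apply le_of_mul_le_mul_right _ hsbpos
        calc p * Real.sqrt (B.card:ℝ) * ((P.card:ℝ) - (M.card:ℝ)) * Real.sqrt (B.card:ℝ)
            = p * (Real.sqrt (B.card:ℝ) * Real.sqrt (B.card:ℝ))
              * ((P.card:ℝ) - (M.card:ℝ)) := by ring
          _ = p * (B.card:ℝ) * ((P.card:ℝ) - (M.card:ℝ)) := by rw [hsb]
          _ ≤ 2 * β * (Real.sqrt (B.card:ℝ) * Real.sqrt (Fintype.card V : ℝ)) := key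
          _ = 2 * β * Real.sqrt (Fintype.card V : ℝ) * Real.sqrt (B.card:ℝ) := by ring
      have step2 : 8 * β * Real.sqrt (B.card:ℝ)
          ≤ 2 * β * (Real.sqrt (Fintype.card V : ℝ) * Real.sqrt δ) := by
        have m1 := mul_le_mul_of_nonneg_right h8 (Real.sqrt_nonneg (B.card:ℝ))
        have m2 := mul_le_mul_of_nonneg_right step1 (Real.sqrt_nonneg δ)
        linarith [m1, m2]
      have step3 : Real.sqrt (B.card:ℝ)
          ≤ Real.sqrt (Fintype.card V : ℝ) * Real.sqrt δ / 4 := by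
        have h8β : (0:ℝ) < 8 * β := by linarith
        apply le_of_mul_le_mul_left _ h8β
        calc 8 * β * Real.sqrt (B.card:ℝ)
            ≤ 2 * β * (Real.sqrt (Fintype.card V : ℝ) * Real.sqrt δ) := step2
          _ = 8 * β * (Real.sqrt (Fintype.card V : ℝ) * Real.sqrt δ / 4) := by ring
      have hq : (Real.sqrt (Fintype.card V : ℝ) * Real.sqrt δ / 4)
            * (Real.sqrt (Fintype.card V : ℝ) * Real.sqrt δ / 4)
          = (Fintype.card V : ℝ) * δ / 16 := by
        calc (Real.sqrt (Fintype.card V : ℝ) * Real.sqrt δ / 4)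
              * (Real.sqrt (Fintype.card V : ℝ) * Real.sqrt δ / 4)
            = (Real.sqrt (Fintype.card V : ℝ) * Real.sqrt (Fintype.card V : ℝ))
              * (Real.sqrt δ * Real.sqrt δ) / 16 := by ring
          _ = (Fintype.card V : ℝ) * δ / 16 := by rw [hsn, hsd]
      have hsq := mul_self_le_mul_self (Real.sqrt_nonneg (B.card:ℝ)) step3
      rw [hsb, hq] at hsq
      linarith
  -- conclude
  rw [hsum']
  push_cast
  have hABr : (A.card:ℝ) + (B.card:ℝ) = (Fintype.card V : ℝ) := by exact_mod_cast hAB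
  have hdn : (0:ℝ) ≤ δ * (Fintype.card V : ℝ) := mul_nonneg hδ0.le hnr0
  linarith
end

section
/- Let δ ∈ (0,1), let p ∈ (0,1) and β > 0, and let G be a (p,β)-jumbled graph on n vertices with minimum degree at least δnp. Let s : V(G) → {−1,+1} be any opinion assignment and let s' be the opinion obtained from s by one step of majority dynamics. If ∑_{v∈V(G)} s(v) ≥ (1 − α)·n for some α ≤ δ/2, then ∑_{v∈V(G)} s'(v) ≥ (1 − α·16β²/(δ²n²p²))·n. -/
open Finset

lemma sum_pm {V : Type*} (s : V → ℤ) (hs : ∀ v, s v = 1 ∨ s v = -1)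
    (T : Finset V) [DecidablePred fun v => s v = -1] :
    ∑ v ∈ T, s v = (T.card : ℤ) - 2 * ((T.filter fun v => s v = -1)).card := by
  classical
  have hsub : (T.filter fun v => s v = -1) ⊆ T := Finset.filter_subset _ _
  rw [← Finset.sum_filter_add_sum_filter_not T (fun v => s v = -1)]
  have h1 : ∑ v ∈ T.filter (fun v => s v = -1), s v
      = -((T.filter fun v => s v = -1).card : ℤ) := by
    calc ∑ v ∈ T.filter (fun v => s v = -1), s v
        = ∑ _v ∈ T.filter (fun v => s v = -1), (-1 : ℤ) :=
          Finset.sum_congr rfl (fun v hv => (Finset.mem_filter.mp hv).2)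
      _ = _ := by simp
  have h2 : ∑ v ∈ T.filter (fun v => ¬ s v = -1), s v
      = ((T.filter fun v => ¬ s v = -1).card : ℤ) := by
    calc ∑ v ∈ T.filter (fun v => ¬ s v = -1), s v
        = ∑ _v ∈ T.filter (fun v => ¬ s v = -1), (1 : ℤ) :=
          Finset.sum_congr rfl (fun v hv =>
            (hs v).resolve_right (Finset.mem_filter.mp hv).2)
      _ = _ := by simp
  rw [h1, h2, Finset.filter_not, Finset.card_sdiff_of_subset hsub]
  have hle := Finset.card_le_card hsub
  push_cast [Nat.cast_sub hle]
  ring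

/-- **One majority step amplifies near-unanimity on jumbled graphs.**
If `G` is a `(p,β)`-jumbled graph on `n` vertices with minimum degree at least `δnp`
and the ±1 opinion `s` satisfies `∑ᵥ s(v) ≥ (1 - α) n` for some `α ≤ δ/2`, then after
one step of majority dynamics `∑ᵥ s'(v) ≥ (1 - α · 16β²/(δ²n²p²)) n`. -/
theorem jumbled_majority_step_amplify {V : Type*} [Fintype V]
    (G : SimpleGraph V) [DecidableRel G.Adj] (δ p β α : ℝ)
    (hδ : δ ∈ Set.Ioo (0 : ℝ) 1) (hp : p ∈ Set.Ioo (0 : ℝ) 1) (hβ : 0 < β)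
    (hjumbled : IsJumbled G p β)
    (hdeg : ∀ v : V, δ * (Fintype.card V) * p ≤ (G.degree v : ℝ))
    (s : V → ℤ) (hs : ∀ v, s v = 1 ∨ s v = -1)
    (hα : α ≤ δ/2)
    (hsum : (1 - α) * (Fintype.card V) ≤ ((∑ v, s v : ℤ) : ℝ)) :
    (1 - α * (16 * β ^ 2 / (δ ^ 2 * (Fintype.card V : ℝ) ^ 2 * p ^ 2))) *
        (Fintype.card V) ≤ ((∑ v, graphMajStep G s v : ℤ) : ℝ) := by
  classical
  obtain ⟨hp0, hp1⟩ := hp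
  obtain ⟨hδ0, hδ1⟩ := hδ
  rcases Nat.eq_zero_or_pos (Fintype.card V) with h0 | hpos
  · have : IsEmpty V := Fintype.card_eq_zero_iff.mp h0
    simp [h0]
  have hN : (0:ℝ) < (Fintype.card V : ℝ) := by exact_mod_cast hpos
  set n : ℝ := (Fintype.card V : ℝ) with hn
  set M : Finset V := univ.filter (fun v => s v = -1) with hM
  set M' : Finset V := univ.filter (fun v => graphMajStep G s v = -1) with hM'
  have ha : (0:ℝ) ≤ (M.card : ℝ) := Nat.cast_nonneg _
  have hb : (0:ℝ) ≤ (M'.card : ℝ) := Nat.cast_nonneg _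
  -- sum formulas
  have hsum1 : (∑ v, s v : ℤ) = (Fintype.card V : ℤ) - 2 * M.card := by
    rw [sum_pm s hs]
    simp [hM, Finset.card_univ]
  have hs' : ∀ v, graphMajStep G s v = 1 ∨ graphMajStep G s v = -1 := by
    intro v
    unfold graphMajStep
    dsimp only
    split_ifs with h1 h2
    · left; rfl
    · right; rfl
    · exact hs v
  have hsum2 : (∑ v, graphMajStep G s v : ℤ) = (Fintype.card V : ℤ) - 2 * M'.card := by
    rw [sum_pm _ hs']
    simp [hM', Finset.card_univ]
  -- (A) : 2|M| ≤ αn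
  have hA : 2 * (M.card : ℝ) ≤ α * n := by
    rw [hsum1] at hsum
    push_cast at hsum
    nlinarith [hsum]
  have hα0 : 0 ≤ α := by nlinarith
  -- (B) : each v ∈ M' has at least δnp/2 neighbours in M
  have hB : ∀ v ∈ M', δ * n * p / 2 ≤ ((M.filter (G.Adj v)).card : ℝ) := by
    intro v hv
    have hv' : graphMajStep G s v = -1 := (Finset.mem_filter.mp hv).2
    have ht : ∑ u ∈ G.neighborFinset v, s u ≤ 0 := by
      by_contra h
      push_neg at h
      simp only [graphMajStep] at hv'
      rw [if_pos h] at hv'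
      norm_num at hv'
    rw [sum_pm s hs] at ht
    have hcard : ((G.neighborFinset v).filter fun u => s u = -1) = M.filter (G.Adj v) := by
      rw [hM, SimpleGraph.neighborFinset_eq_filter, Finset.filter_filter, Finset.filter_filter]
      simp only [and_comm]
    rw [hcard, SimpleGraph.card_neighborFinset_eq_degree] at ht
    have hdv : δ * n * p ≤ (G.degree v : ℝ) := hdeg v
    have ht' : (G.degree v : ℝ) ≤ 2 * ((M.filter (G.Adj v)).card : ℝ) := by
      exact_mod_cast sub_nonpos.mp ht
    linarith
  -- edge count from M' to M
  have hE : (edgeCount G M' M : ℝ) = ∑ v ∈ M', ((M.filter (G.Adj v)).card : ℝ) := by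
    unfold edgeCount
    push_cast
    refine Finset.sum_congr rfl fun v _ => ?_
    rw [Finset.sum_boole]
  have hBsum : (M'.card : ℝ) * (δ * n * p / 2) ≤ (edgeCount G M' M : ℝ) := by
    rw [hE]
    calc (M'.card : ℝ) * (δ * n * p / 2) = ∑ _v ∈ M', (δ * n * p / 2) := by
          rw [Finset.sum_const, nsmul_eq_mul]
      _ ≤ _ := Finset.sum_le_sum hB
  have hC : (edgeCount G M' M : ℝ) ≤ p * M'.card * M.card
      + β * Real.sqrt ((M'.card : ℝ) * M.card) := by
    have h := hjumbled M' M
    rw [abs_le] at h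
    linarith [h.2]
  -- combine: b·δnp/4 ≤ β√(ba)
  have haux : (M.card : ℝ) ≤ δ * n / 4 := by nlinarith
  have hpa : p * (M'.card : ℝ) * M.card ≤ (M'.card : ℝ) * (δ * n * p / 4) := by
    have h1 : p * (M'.card : ℝ) * M.card ≤ p * (M'.card : ℝ) * (δ * n / 4) :=
      mul_le_mul_of_nonneg_left haux (by positivity)
    linarith
  have hmain : (M'.card : ℝ) * (δ * n * p / 4)
      ≤ β * Real.sqrt ((M'.card : ℝ) * M.card) := by linarith
  have hsq : ((M'.card : ℝ) * (δ * n * p / 4))^2 ≤ β^2 * ((M'.card : ℝ) * M.card) := by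
    have h1 : ((M'.card : ℝ) * (δ * n * p / 4))^2
        ≤ (β * Real.sqrt ((M'.card : ℝ) * M.card))^2 :=
      pow_le_pow_left₀ (by positivity) hmain 2
    have h2 : (β * Real.sqrt ((M'.card : ℝ) * M.card))^2
        = β^2 * ((M'.card : ℝ) * M.card) := by
      rw [mul_pow, Real.sq_sqrt (by positivity)]
    rw [h2] at h1
    linarith
  have key : (M'.card : ℝ) * (δ^2 * n^2 * p^2) ≤ 16 * β^2 * M.card := by
    rcases eq_or_lt_of_le hb with hb0 | hb0
    · rw [← hb0]
      have : (0:ℝ) ≤ 16 * β^2 * M.card := by positivity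
      linarith
    · have h1 : ((M'.card : ℝ) * (δ^2 * n^2 * p^2 / 16)) * M'.card
          ≤ (β^2 * M.card) * M'.card := by linarith [hsq]
      have h2 := le_of_mul_le_mul_right h1 hb0
      linarith
  -- finish
  have hcast : ((∑ v, graphMajStep G s v : ℤ) : ℝ) = n - 2 * (M'.card : ℝ) := by
    rw [hsum2]; push_cast; ring
  rw [hcast]
  have hden : (0:ℝ) < δ^2 * n^2 * p^2 := by positivity
  have h2b : 2 * (M'.card : ℝ) ≤ α * (16 * β^2 / (δ^2 * n^2 * p^2)) * n := by
    have heq : α * (16 * β^2 / (δ^2 * n^2 * p^2)) * n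
        = (α * 16 * β^2 * n) / (δ^2 * n^2 * p^2) := by ring
    rw [heq, le_div_iff₀ hden]
    have h3 : 16 * β^2 * (2 * (M.card : ℝ)) ≤ 16 * β^2 * (α * n) :=
      mul_le_mul_of_nonneg_left hA (by positivity)
    linarith [key, h3]
  linarith [h2b]
end
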